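/- Suppose Assumption (Bayes boundary) holds, φ : ℝ → ℝ is strictly concave, strictly increasing, and differentiable at 0 with φ'(0) > 0, E[sup_{b∈B}(|φ(X·b)| + |φ(−X·b)|)] < ∞, B = {b ∈ ℝ^d : ‖b‖ ≤ R} for some R ∈ (0,∞), and for every nonzero v ∈ ℝ^d, P(X·v ≠ 0) > 0. Suppose further that, with T = X·b₀: (i) E[|T|] < ∞; (ii) there exists a measurable h : ℝ → [0,1] with η(X) = h(T) almost surely, h(t) > 1/2 for all t > 0, and h(t) < 1/2 for all t < 0; and (iii) for every b ∈ ℝ^d there exists a_b ∈ ℝ with a_b·b₀ ∈ B and E[X·b | σ(T)] = a_b·T almost surely. Then the unique maximizer b_φ of Q_φ over B satisfies 1{X·b_φ ≥ 0} = 1{η(X) ≥ 1/2} almost surely. -/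

import Mathlib

open MeasureTheory Filter Topology

noncomputable def psiF (h φ : ℝ → ℝ) (t s : ℝ) : ℝ := h t * φ s + (1 - h t) * φ (-s)

section helpers

lemma concave_secant_anti {f : ℝ → ℝ} (hf : ConcaveOn ℝ Set.univ f) {a x y : ℝ}
    (hxa : x ≠ a) (hya : y ≠ a) (hxy : x ≤ y) :
    (f y - f a) / (y - a) ≤ (f x - f a) / (x - a) := by
  have := hf.neg.secant_mono (Set.mem_univ a) (Set.mem_univ x) (Set.mem_univ y) hxa hya hxy
  simp only [Pi.neg_apply] at this
  rw [show -f x - -f a = -(f x - f a) by ring, show -f y - -f a = -(f y - f a) by ring,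
    neg_div, neg_div, neg_le_neg_iff] at this
  exact this

/-- A measurably-selectable supergradient slope of a concave function at `x`. -/
noncomputable def rSlope (f : ℝ → ℝ) (x : ℝ) : ℝ :=
  ⨆ k : ℕ, (f (x + 1 / (k + 1)) - f x) / (1 / (k + 1))

lemma rSlope_bddAbove {f : ℝ → ℝ} (hf : ConcaveOn ℝ Set.univ f) (x : ℝ) :
    BddAbove (Set.range fun k : ℕ => (f (x + 1 / (k + 1)) - f x) / (1 / (k + 1))) := by
  refine ⟨(f (x - 1) - f x) / (x - 1 - x), ?_⟩
  rintro _ ⟨k, rfl⟩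
  have hk : (0 : ℝ) < 1 / (k + 1) := by positivity
  have h1 : x - 1 ≠ x := by linarith
  have h2 : x + 1 / (k + 1) ≠ x := by linarith
  have := concave_secant_anti hf h1 h2 (by linarith : x - 1 ≤ x + 1 / (k + 1))
  simpa [add_sub_cancel_left] using this

lemma rSlope_support {f : ℝ → ℝ} (hf : ConcaveOn ℝ Set.univ f) (x s : ℝ) :
    f s ≤ f x + rSlope f x * (s - x) := by
  rcases lt_trichotomy s x with hsx | rfl | hsx
  · have hne : s ≠ x := ne_of_lt hsx
    have hr : rSlope f x ≤ (f s - f x) / (s - x) := by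
      refine ciSup_le fun k => ?_
      have hk : (0 : ℝ) < 1 / (k + 1) := by positivity
      have h2 : x + 1 / (k + 1) ≠ x := by linarith
      have := concave_secant_anti hf hne h2 (by linarith : s ≤ x + 1 / (k + 1))
      simpa [add_sub_cancel_left] using this
    have hneg : s - x < 0 := by linarith
    nlinarith [mul_le_mul_of_nonpos_right hr (le_of_lt hneg),
      div_mul_cancel₀ (f s - f x) (ne_of_lt hneg)]
  · simp
  · obtain ⟨k, hk⟩ := exists_nat_one_div_lt (show (0:ℝ) < s - x by linarith)
    have hkpos : (0 : ℝ) < 1 / (k + 1) := by positivity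
    have h2 : x + 1 / (k + 1) ≠ x := by linarith
    have hne : s ≠ x := ne_of_gt hsx
    have hle : (f s - f x) / (s - x) ≤ (f (x + 1 / (k + 1)) - f x) / (1 / (k + 1)) := by
      have := concave_secant_anti hf h2 hne (by linarith : x + 1 / (k + 1) ≤ s)
      simpa [add_sub_cancel_left] using this
    have hsup : (f (x + 1 / (k + 1)) - f x) / (1 / (k + 1)) ≤ rSlope f x :=
      le_ciSup (rSlope_bddAbove hf x) k
    have hpos : 0 < s - x := by linarith
    have : (f s - f x) / (s - x) ≤ rSlope f x := hle.trans hsup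
    nlinarith [div_mul_cancel₀ (f s - f x) (ne_of_gt hpos)]

lemma rSlope_lb {f : ℝ → ℝ} (hf : ConcaveOn ℝ Set.univ f) (x : ℝ) :
    f (x + 1) - f x ≤ rSlope f x := by
  have h := le_ciSup (rSlope_bddAbove hf x) 0
  calc f (x + 1) - f x = (f (x + 1 / ((0:ℕ) + 1)) - f x) / (1 / ((0:ℕ) + 1)) := by norm_num
    _ ≤ rSlope f x := h

lemma rSlope_ub {f : ℝ → ℝ} (hf : ConcaveOn ℝ Set.univ f) (x : ℝ) :
    rSlope f x ≤ f x - f (x - 1) := by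
  have h := rSlope_support hf x (x - 1)
  have : f (x - 1) ≤ f x + rSlope f x * (-1) := by simpa using h
  linarith

lemma psi_concave {φ h : ℝ → ℝ} (hφc : ConcaveOn ℝ Set.univ φ)
    (hh01 : ∀ t, h t ∈ Set.Icc (0:ℝ) 1) (t : ℝ) :
    ConcaveOn ℝ Set.univ (psiF h φ t) := by
  refine ⟨convex_univ, fun x _ y _ p q hp hq hpq => ?_⟩
  simp only [psiF, smul_eq_mul]
  have H1 := hφc.2 (Set.mem_univ x) (Set.mem_univ y) hp hq hpq
  have H2 := hφc.2 (Set.mem_univ (-x)) (Set.mem_univ (-y)) hp hq hpq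
  simp only [smul_eq_mul] at H1 H2
  rw [show p * -x + q * -y = -(p * x + q * y) by ring] at H2
  have h0 := (hh01 t).1; have h1 := (hh01 t).2
  nlinarith [mul_le_mul_of_nonneg_left H1 h0,
    mul_le_mul_of_nonneg_left H2 (by linarith : (0:ℝ) ≤ 1 - h t)]

lemma psi_mid {φ h : ℝ → ℝ} (hφ : StrictConcaveOn ℝ Set.univ φ)
    (hh01 : ∀ t, h t ∈ Set.Icc (0:ℝ) 1) (t : ℝ) {s1 s2 : ℝ} (hne : s1 ≠ s2) :
    (psiF h φ t s1 + psiF h φ t s2) / 2 < psiF h φ t ((s1 + s2) / 2) := by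
  simp only [psiF]
  have A := hφ.2 (Set.mem_univ s1) (Set.mem_univ s2) hne one_half_pos one_half_pos (by norm_num)
  have Bv := hφ.2 (Set.mem_univ (-s1)) (Set.mem_univ (-s2))
    (fun c => hne (neg_injective c)) one_half_pos one_half_pos (by norm_num)
  simp only [smul_eq_mul] at A Bv
  rw [show (1:ℝ)/2 * s1 + 1/2 * s2 = (s1 + s2)/2 by ring] at A
  rw [show (1:ℝ)/2 * -s1 + 1/2 * -s2 = -((s1 + s2)/2) by ring] at Bv
  have h0 := (hh01 t).1; have h1 := (hh01 t).2
  have dA : 0 < φ ((s1 + s2)/2) - (1/2 * φ s1 + 1/2 * φ s2) := by linarith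
  have dB : 0 < φ (-((s1 + s2)/2)) - (1/2 * φ (-s1) + 1/2 * φ (-s2)) := by linarith
  have key : 0 < h t * (φ ((s1 + s2)/2) - (1/2 * φ s1 + 1/2 * φ s2))
      + (1 - h t) * (φ (-((s1 + s2)/2)) - (1/2 * φ (-s1) + 1/2 * φ (-s2))) := by
    rcases eq_or_lt_of_le h0 with he | hpos
    · rw [← he]; simpa using by linarith
    · exact add_pos_of_pos_of_nonneg (mul_pos hpos dA) (mul_nonneg (by linarith) dB.le)
  nlinarith

lemma concave_comp_linear {f : ℝ → ℝ} (hf : ConcaveOn ℝ Set.univ f) (c : ℝ) :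
    ConcaveOn ℝ Set.univ (fun t => f (t * c)) := by
  refine ⟨convex_univ, fun x _ y _ p q hp hq hpq => ?_⟩
  have := hf.2 (Set.mem_univ (x * c)) (Set.mem_univ (y * c)) hp hq hpq
  simp only [smul_eq_mul] at this ⊢
  rw [show (p * x + q * y) * c = p * (x * c) + q * (y * c) by ring]
  exact this

lemma tangent_at_zero {φ : ℝ → ℝ} (hφc : ConcaveOn ℝ Set.univ φ)
    (hφdiff : DifferentiableAt ℝ φ 0) (s : ℝ) : φ s ≤ φ 0 + deriv φ 0 * s := by
  have hder : Tendsto (slope φ 0) (𝓝[≠] 0) (𝓝 (deriv φ 0)) :=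
    hasDerivAt_iff_tendsto_slope.mp hφdiff.hasDerivAt
  rcases lt_trichotomy s 0 with hs | rfl | hs
  · have hmono : Filter.Tendsto (slope φ 0) (𝓝[<] (0:ℝ)) (𝓝 (deriv φ 0)) :=
      hder.mono_left (nhdsWithin_mono 0 (fun x hx => ne_of_lt hx))
    have hev : ∀ᶠ u in 𝓝[<] (0:ℝ), slope φ 0 u ≤ slope φ 0 s := by
      filter_upwards [eventually_nhdsWithin_of_eventually_nhds (eventually_gt_nhds hs),
        eventually_mem_nhdsWithin] with u hu1 (hu2 : u ∈ Set.Iio (0:ℝ))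
      have := concave_secant_anti hφc (ne_of_lt hs) (ne_of_lt hu2) hu1.le
      simpa [slope_def_field] using this
    have hle : deriv φ 0 ≤ slope φ 0 s := le_of_tendsto hmono hev
    rw [slope_def_field] at hle
    have h2 : (φ s - φ 0) / (s - 0) * s ≤ deriv φ 0 * s :=
      mul_le_mul_of_nonpos_right hle hs.le
    rw [sub_zero, div_mul_cancel₀ _ (ne_of_lt hs)] at h2
    linarith
  · simp
  · have hmono : Filter.Tendsto (slope φ 0) (𝓝[>] (0:ℝ)) (𝓝 (deriv φ 0)) :=
      hder.mono_left (nhdsWithin_mono 0 (fun x hx => ne_of_gt hx))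
    have hev : ∀ᶠ u in 𝓝[>] (0:ℝ), slope φ 0 s ≤ slope φ 0 u := by
      filter_upwards [eventually_nhdsWithin_of_eventually_nhds (eventually_lt_nhds hs),
        eventually_mem_nhdsWithin] with u hu1 (hu2 : u ∈ Set.Ioi (0:ℝ))
      have := concave_secant_anti hφc (ne_of_gt hu2) (ne_of_gt hs) hu1.le
      simpa [slope_def_field] using this
    have hle : slope φ 0 s ≤ deriv φ 0 := ge_of_tendsto hmono hev
    rw [slope_def_field] at hle
    have h2 : (φ s - φ 0) / (s - 0) * s ≤ deriv φ 0 * s :=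
      mul_le_mul_of_nonneg_right hle hs.le
    rw [sub_zero, div_mul_cancel₀ _ (ne_of_gt hs)] at h2
    linarith

lemma psi_abs_le {φ h : ℝ → ℝ} (hh01 : ∀ t, h t ∈ Set.Icc (0:ℝ) 1) (t s : ℝ) :
    |psiF h φ t s| ≤ |φ s| + |φ (-s)| := by
  have h0 := (hh01 t).1; have h1 := (hh01 t).2
  calc |psiF h φ t s| ≤ |h t * φ s| + |(1 - h t) * φ (-s)| := abs_add_le _ _
    _ = h t * |φ s| + (1 - h t) * |φ (-s)| := by
        rw [abs_mul, abs_mul, abs_of_nonneg h0, abs_of_nonneg (by linarith : (0:ℝ) ≤ 1 - h t)]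
    _ ≤ |φ s| + |φ (-s)| := by
        nlinarith [abs_nonneg (φ s), abs_nonneg (φ (-s))]

end helpers

section keylemmas

variable {Ω : Type*} [m0 : MeasurableSpace Ω]

/-- Conditional Jensen via supporting lines. -/
lemma key1 (P : Measure Ω) [IsProbabilityMeasure P]
    (T W : Ω → ℝ) (hTm : Measurable T) (hWm : Measurable W)
    (hTint : Integrable T P) (hWint : Integrable W P)
    (φ h : ℝ → ℝ) (hφc : ConcaveOn ℝ Set.univ φ) (hφcont : Continuous φ)
    (hh : Measurable h) (hh01 : ∀ t, h t ∈ Set.Icc (0:ℝ) 1)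
    (a : ℝ)
    (hacond : P[W | MeasurableSpace.comap T inferInstance] =ᵐ[P] fun ω => a * T ω)
    (hIW : Integrable (fun ω => psiF h φ (T ω) (W ω)) P)
    (hIa : Integrable (fun ω => psiF h φ (T ω) (a * T ω)) P) :
    ∫ ω, psiF h φ (T ω) (W ω) ∂P ≤ ∫ ω, psiF h φ (T ω) (a * T ω) ∂P := by
  have hψconc : ∀ t, ConcaveOn ℝ Set.univ (psiF h φ t) := psi_concave hφc hh01
  have hψcm : Measurable (fun p : ℝ × ℝ => psiF h φ p.1 p.2) := by
    unfold psiF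
    exact ((hh.comp measurable_fst).mul
        (hφcont.measurable.comp measurable_snd)).add
      ((measurable_const.sub (hh.comp measurable_fst)).mul
        (hφcont.measurable.comp measurable_snd.neg))
  have hψabs : ∀ t s, |psiF h φ t s| ≤ |φ s| + |φ (-s)| := psi_abs_le hh01
  have hmT : MeasurableSpace.comap T inferInstance ≤ m0 := hTm.comap_le
  haveI : IsFiniteMeasure (P.trim hmT) := isFiniteMeasure_trim hmT
  have hTmT : Measurable[MeasurableSpace.comap T inferInstance] T :=
    Measurable.of_comap_le le_rfl
  -- the supergradient slope function
  set m : ℝ → ℝ := fun t => rSlope (psiF h φ t) (a * t) with hmdef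
  have hmmeas : Measurable m := by
    have hk : ∀ k : ℕ, Measurable (fun t =>
        (psiF h φ t (a * t + 1 / (k + 1)) - psiF h φ t (a * t)) / (1 / (k + 1))) := by
      intro k
      have h1 : Measurable fun t : ℝ => psiF h φ t (a * t + 1 / (k + 1)) :=
        hψcm.comp (measurable_id.prodMk ((measurable_const.mul measurable_id).add
          measurable_const))
      have h2 : Measurable fun t : ℝ => psiF h φ t (a * t) :=
        hψcm.comp (measurable_id.prodMk (measurable_const.mul measurable_id))
      exact (h1.sub h2).div_const _
    exact Measurable.iSup hk
  -- Z and its conditional expectation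
  set Z : Ω → ℝ := fun ω => W ω - a * T ω with hZdef
  have hZint : Integrable Z P := hWint.sub (hTint.const_mul a)
  have hZmeas : Measurable Z := hWm.sub (hTm.const_mul a)
  have hZcond : P[Z | MeasurableSpace.comap T inferInstance] =ᵐ[P] fun _ => 0 := by
    have haT : P[(fun ω => a * T ω) | MeasurableSpace.comap T inferInstance]
        = fun ω => a * T ω :=
      condExp_of_stronglyMeasurable hmT ((hTmT.const_mul a).stronglyMeasurable)
        (hTint.const_mul a)
    have hsub : P[Z | MeasurableSpace.comap T inferInstance] =ᵐ[P]
        P[W | MeasurableSpace.comap T inferInstance]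
          - P[(fun ω => a * T ω) | MeasurableSpace.comap T inferInstance] :=
      condExp_sub hWint (hTint.const_mul a) _
    filter_upwards [hsub, hacond] with ω h1 h2
    rw [h1, Pi.sub_apply, h2, haT, sub_self]
  -- measurability of the two psi-integrands
  have hmeasW : Measurable (fun ω => psiF h φ (T ω) (W ω)) :=
    hψcm.comp (hTm.prodMk hWm)
  have hmeasA : Measurable (fun ω => psiF h φ (T ω) (a * T ω)) :=
    hψcm.comp (hTm.prodMk (hTm.const_mul a))
  -- step n inequality
  have main_n : ∀ n : ℕ,
      ∫ ω, (if |T ω| ≤ (n:ℝ) then psiF h φ (T ω) (W ω) else 0) ∂P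
        ≤ ∫ ω, (if |T ω| ≤ (n:ℝ) then psiF h φ (T ω) (a * T ω) else 0) ∂P := by
    intro n
    -- a bound for m on {|t| ≤ n}
    obtain ⟨C, hC0, hC⟩ : ∃ C, 0 ≤ C ∧ ∀ u : ℝ, |u| ≤ |a| * n + 1 → |φ u| ≤ C := by
      have hne : (Set.Icc (-(|a| * (n:ℝ) + 1)) (|a| * n + 1)).Nonempty := by
        refine Set.nonempty_Icc.mpr ?_
        have h1 := abs_nonneg a
        have h0 : (0:ℝ) ≤ (n:ℝ) := Nat.cast_nonneg n
        nlinarith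
      obtain ⟨u0, _, hu0⟩ := isCompact_Icc.exists_isMaxOn hne (hφcont.abs.continuousOn)
      refine ⟨|φ u0|, abs_nonneg _, fun u hu => ?_⟩
      exact hu0 (Set.mem_Icc.mpr (abs_le.mp hu))
    have hmb : ∀ t : ℝ, |t| ≤ (n:ℝ) → |m t| ≤ 4 * C := by
      intro t ht
      have h1 : psiF h φ t (a * t + 1) - psiF h φ t (a * t) ≤ m t := rSlope_lb (hψconc t) _
      have h2 : m t ≤ psiF h φ t (a * t) - psiF h φ t (a * t - 1) := rSlope_ub (hψconc t) _
      have hat : |a * t| ≤ |a| * n := by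
        rw [abs_mul]
        exact mul_le_mul_of_nonneg_left ht (abs_nonneg a)
      have e1 : |psiF h φ t (a * t)| ≤ 2 * C := by
        refine (hψabs t _).trans ?_
        have := hC (a * t) (by linarith)
        have := hC (-(a * t)) (by rw [abs_neg]; linarith)
        linarith
      have hat' := abs_le.mp hat
      have e2 : |psiF h φ t (a * t + 1)| ≤ 2 * C := by
        refine (hψabs t _).trans ?_
        have b1 := hC (a * t + 1) (abs_le.mpr ⟨by linarith, by linarith⟩)
        have b2 := hC (-(a * t + 1)) (by rw [abs_neg]; exact abs_le.mpr ⟨by linarith, by linarith⟩)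
        linarith
      have e3 : |psiF h φ t (a * t - 1)| ≤ 2 * C := by
        refine (hψabs t _).trans ?_
        have b1 := hC (a * t - 1) (abs_le.mpr ⟨by linarith, by linarith⟩)
        have b2 := hC (-(a * t - 1)) (by rw [abs_neg]; exact abs_le.mpr ⟨by linarith, by linarith⟩)
        linarith
      rw [abs_le]
      constructor
      · have := abs_le.mp e1; have := abs_le.mp e2; linarith
      · have := abs_le.mp e1; have := abs_le.mp e3; linarith
    set mbar : ℝ → ℝ := fun t => if |t| ≤ (n:ℝ) then m t else 0 with hmbardef
    have hmbarmeas : Measurable mbar :=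
      Measurable.ite (measurableSet_le (measurable_abs) measurable_const) hmmeas measurable_const
    have hmbarbd : ∀ t, |mbar t| ≤ 4 * C := by
      intro t
      by_cases ht : |t| ≤ (n:ℝ)
      · simpa [mbar, ht] using hmb t ht
      · simp [mbar, ht]; positivity
    -- pointwise supporting-line inequality
    have ptw : ∀ ω, (if |T ω| ≤ (n:ℝ) then psiF h φ (T ω) (W ω) else 0)
        ≤ (if |T ω| ≤ (n:ℝ) then psiF h φ (T ω) (a * T ω) else 0) + mbar (T ω) * Z ω := by
      intro ω
      by_cases hω : |T ω| ≤ (n:ℝ)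
      · simp only [hω, if_true, mbar, hmdef]
        have := rSlope_support (hψconc (T ω)) (a * T ω) (W ω)
        simpa [hZdef] using this
      · simp [hω, mbar]
    -- integrability
    have hI1 : Integrable (fun ω => if |T ω| ≤ (n:ℝ) then psiF h φ (T ω) (W ω) else 0) P := by
      refine hIW.abs.mono' ?_ (Eventually.of_forall fun ω => ?_)
      · exact (Measurable.ite (measurableSet_le hTm.abs measurable_const) hmeasW
          measurable_const).aestronglyMeasurable
      · by_cases hω : |T ω| ≤ (n:ℝ) <;> simp [hω, abs_nonneg, le_abs_self]
    have hI2 : Integrable (fun ω => if |T ω| ≤ (n:ℝ) then psiF h φ (T ω) (a * T ω) else 0) P := by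
      refine hIa.abs.mono' ?_ (Eventually.of_forall fun ω => ?_)
      · exact (Measurable.ite (measurableSet_le hTm.abs measurable_const) hmeasA
          measurable_const).aestronglyMeasurable
      · by_cases hω : |T ω| ≤ (n:ℝ) <;> simp [hω, abs_nonneg, le_abs_self]
    have hI3 : Integrable (fun ω => mbar (T ω) * Z ω) P :=
      hZint.bdd_mul (c := 4 * C) ((hmbarmeas.comp hTm).aestronglyMeasurable)
        (Eventually.of_forall fun ω => by simpa using hmbarbd (T ω))
    -- the cross term vanishes
    have hzero : ∫ ω, mbar (T ω) * Z ω ∂P = 0 := by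
      have hsm : StronglyMeasurable[MeasurableSpace.comap T inferInstance]
          (fun ω => mbar (T ω)) := (hmbarmeas.comp hTmT).stronglyMeasurable
      have hmul := condExp_mul_of_stronglyMeasurable_left hsm
        (by exact hI3 : Integrable ((fun ω => mbar (T ω)) * Z) P) hZint
      calc ∫ ω, mbar (T ω) * Z ω ∂P
          = ∫ ω, ((fun ω => mbar (T ω)) * Z) ω ∂P := rfl
        _ = ∫ ω, (P[(fun ω => mbar (T ω)) * Z | MeasurableSpace.comap T inferInstance]) ω ∂P :=
            (integral_condExp hmT).symm
        _ = ∫ ω, ((fun ω => mbar (T ω)) * P[Z | MeasurableSpace.comap T inferInstance]) ω ∂P :=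
            integral_congr_ae hmul
        _ = ∫ ω, (0:ℝ) ∂P := by
            refine integral_congr_ae ?_
            filter_upwards [hZcond] with ω hω
            simp [Pi.mul_apply, hω]
        _ = 0 := integral_zero _ _
    calc ∫ ω, (if |T ω| ≤ (n:ℝ) then psiF h φ (T ω) (W ω) else 0) ∂P
        ≤ ∫ ω, ((if |T ω| ≤ (n:ℝ) then psiF h φ (T ω) (a * T ω) else 0) + mbar (T ω) * Z ω) ∂P :=
          integral_mono hI1 (hI2.add hI3) ptw
      _ = ∫ ω, (if |T ω| ≤ (n:ℝ) then psiF h φ (T ω) (a * T ω) else 0) ∂P := by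
          rw [integral_add hI2 hI3, hzero, add_zero]
  -- pass to the limit
  have hlim : ∀ (G : Ω → ℝ), Measurable G → Integrable (fun ω => psiF h φ (T ω) (G ω)) P →
      Tendsto (fun n : ℕ => ∫ ω, (if |T ω| ≤ (n:ℝ) then psiF h φ (T ω) (G ω) else 0) ∂P)
        atTop (𝓝 (∫ ω, psiF h φ (T ω) (G ω) ∂P)) := by
    intro G hGm hGI
    refine tendsto_integral_of_dominated_convergence (fun ω => |psiF h φ (T ω) (G ω)|)
      (fun n => ?_) hGI.abs (fun n => Eventually.of_forall fun ω => ?_)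
      (Eventually.of_forall fun ω => ?_)
    · exact (Measurable.ite (measurableSet_le hTm.abs measurable_const)
        (hψcm.comp (hTm.prodMk hGm)) measurable_const).aestronglyMeasurable
    · by_cases hω : |T ω| ≤ (n:ℝ) <;> simp [hω, abs_nonneg, le_abs_self]
    · have : ∀ᶠ n : ℕ in atTop, (if |T ω| ≤ (n:ℝ) then psiF h φ (T ω) (G ω) else 0)
          = psiF h φ (T ω) (G ω) := by
        filter_upwards [eventually_ge_atTop (Nat.ceil |T ω|)] with k hk
        have : |T ω| ≤ (k:ℝ) := le_trans (Nat.le_ceil _) (by exact_mod_cast hk)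
        simp [this]
      exact tendsto_const_nhds.congr' (this.mono fun n hn => hn.symm)
  exact le_of_tendsto_of_tendsto' (hlim W hWm hIW) (hlim _ (hTm.const_mul a) hIa) main_n


/-- Positive directional derivative at 0 gives a better point. -/
lemma key2 (P : Measure Ω) [IsProbabilityMeasure P]
    (T : Ω → ℝ) (hTm : Measurable T) (hTint : Integrable T P)
    (φ h : ℝ → ℝ) (hφc : ConcaveOn ℝ Set.univ φ) (hφcont : Continuous φ)
    (hφdiff : DifferentiableAt ℝ φ 0)
    (hh : Measurable h) (hh01 : ∀ t, h t ∈ Set.Icc (0:ℝ) 1)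
    (t₁ : ℝ) (ht₁ : 0 < t₁)
    (hInt1 : Integrable (fun ω => psiF h φ (T ω) (t₁ * T ω)) P)
    (hpos : 0 < deriv φ 0 * ∫ ω, (2 * h (T ω) - 1) * T ω ∂P) :
    ∃ t : ℝ, 0 < t ∧ t ≤ t₁ ∧ φ 0 < ∫ ω, psiF h φ (T ω) (t * T ω) ∂P := by
  classical
  set c0 := deriv φ 0 with hc0
  set u : ℕ → ℝ := fun k => t₁ / (k + 1) with hu
  have hupos : ∀ k : ℕ, 0 < u k := fun k => by positivity
  have hule : ∀ k : ℕ, u k ≤ t₁ := by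
    intro k
    rw [hu]
    rw [div_le_iff₀ (by positivity : (0:ℝ) < (k:ℝ) + 1)]
    nlinarith [Nat.cast_nonneg (α := ℝ) k]
  have hu0 : Tendsto u atTop (𝓝 0) := by
    have h1 : Tendsto (fun k : ℕ => (1:ℝ) / (k + 1)) atTop (𝓝 0) :=
      tendsto_one_div_add_atTop_nhds_zero_nat
    have := h1.const_mul t₁
    simpa [hu, div_eq_mul_inv, mul_comm, mul_assoc, one_div] using this
  have huseq : Tendsto u atTop (𝓝[≠] (0:ℝ)) := by
    refine tendsto_nhdsWithin_of_tendsto_nhds_of_eventually_within u hu0 ?_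
    exact Eventually.of_forall fun k => by simp [ne_of_gt (hupos k)]
  -- pointwise derivative
  have hψconc : ∀ t, ConcaveOn ℝ Set.univ (psiF h φ t) := psi_concave hφc hh01
  have hF0 : ∀ τ : ℝ, psiF h φ τ (0 * τ) = φ 0 := by
    intro τ; simp [psiF]; ring
  have hDer : ∀ τ : ℝ, HasDerivAt (fun t => psiF h φ τ (t * τ)) (c0 * ((2 * h τ - 1) * τ)) 0 := by
    intro τ
    have h1 : HasDerivAt (fun t : ℝ => t * τ) τ 0 := by
      simpa using (hasDerivAt_id (0:ℝ)).mul_const τ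
    have hφ0 : HasDerivAt φ c0 ((fun t : ℝ => t * τ) 0) := by
      simpa [hc0] using hφdiff.hasDerivAt
    have h2 : HasDerivAt (fun t : ℝ => φ (t * τ)) (c0 * τ) 0 := hφ0.comp 0 h1
    have hφ0' : HasDerivAt φ c0 ((fun t : ℝ => -(t * τ)) 0) := by
      simpa [hc0] using hφdiff.hasDerivAt
    have h3 : HasDerivAt (fun t : ℝ => φ (-(t * τ))) (c0 * -τ) 0 := hφ0'.comp 0 h1.neg
    have hsum := (h2.const_mul (h τ)).add (h3.const_mul (1 - h τ))
    have heq : h τ * (c0 * τ) + (1 - h τ) * (c0 * -τ) = c0 * ((2 * h τ - 1) * τ) := by ring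
    rw [heq] at hsum
    exact hsum
  -- slope sequences
  have hslope : ∀ τ : ℝ, Tendsto (fun k => (psiF h φ τ (u k * τ) - φ 0) / u k) atTop
      (𝓝 (c0 * ((2 * h τ - 1) * τ))) := by
    intro τ
    have hcomp := (hasDerivAt_iff_tendsto_slope.mp (hDer τ)).comp huseq
    refine hcomp.congr fun k => ?_
    simp only [Function.comp_apply, slope_def_field, hF0, sub_zero]
  -- slope bounds via concavity
  have hconcT : ∀ τ : ℝ, ConcaveOn ℝ Set.univ (fun t => psiF h φ τ (t * τ)) :=
    fun τ => concave_comp_linear (hψconc τ) τ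
  have hsl_le : ∀ τ : ℝ, ∀ k : ℕ,
      (psiF h φ τ (u k * τ) - φ 0) / u k ≤ c0 * ((2 * h τ - 1) * τ) := by
    intro τ k
    have hmono : Tendsto (slope (fun t => psiF h φ τ (t * τ)) 0) (𝓝[>] (0:ℝ))
        (𝓝 (c0 * ((2 * h τ - 1) * τ))) :=
      (hasDerivAt_iff_tendsto_slope.mp (hDer τ)).mono_left
        (nhdsWithin_mono 0 (fun x hx => ne_of_gt hx))
    have hev : ∀ᶠ v in 𝓝[>] (0:ℝ), slope (fun t => psiF h φ τ (t * τ)) 0 (u k)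
        ≤ slope (fun t => psiF h φ τ (t * τ)) 0 v := by
      filter_upwards [eventually_nhdsWithin_of_eventually_nhds (eventually_lt_nhds (hupos k)),
        eventually_mem_nhdsWithin] with v hv1 (hv2 : v ∈ Set.Ioi (0:ℝ))
      have := concave_secant_anti (hconcT τ) (ne_of_gt hv2) (ne_of_gt (hupos k)) hv1.le
      simpa [slope_def_field] using this
    have hfin := ge_of_tendsto hmono hev
    have heq : slope (fun t => psiF h φ τ (t * τ)) 0 (u k)
        = (psiF h φ τ (u k * τ) - φ 0) / u k := by
      simp only [slope_def_field, hF0, sub_zero]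
    rw [heq] at hfin
    exact hfin
  have hsl_ge : ∀ τ : ℝ, ∀ k : ℕ,
      (psiF h φ τ (t₁ * τ) - φ 0) / t₁ ≤ (psiF h φ τ (u k * τ) - φ 0) / u k := by
    intro τ k
    rcases eq_or_lt_of_le (hule k) with he | hlt
    · rw [he]
    · have h2 := concave_secant_anti (hconcT τ) (ne_of_gt (hupos k)) (ne_of_gt ht₁) hlt.le
      simpa only [sub_zero, hF0] using h2
  -- dominated convergence
  set bound : Ω → ℝ := fun ω => |psiF h φ (T ω) (t₁ * T ω) - φ 0| / t₁ + |c0| * |T ω| with hbound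
  have hbound_int : Integrable bound P :=
    (((hInt1.sub (integrable_const (φ 0))).abs.div_const t₁)).add (hTint.abs.const_mul |c0|)
  have hψcm : Measurable (fun p : ℝ × ℝ => psiF h φ p.1 p.2) := by
    unfold psiF
    exact ((hh.comp measurable_fst).mul
        (hφcont.measurable.comp measurable_snd)).add
      ((measurable_const.sub (hh.comp measurable_fst)).mul
        (hφcont.measurable.comp measurable_snd.neg))
  have hGmeas : ∀ k : ℕ, Measurable (fun ω => (psiF h φ (T ω) (u k * T ω) - φ 0) / u k) :=
    fun k => (((hψcm.comp (hTm.prodMk (hTm.const_mul (u k)))).sub measurable_const).div_const _)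
  have hGbd : ∀ k : ℕ, ∀ ω, |(psiF h φ (T ω) (u k * T ω) - φ 0) / u k| ≤ bound ω := by
    intro k ω
    have h1 := hsl_le (T ω) k
    have h2 := hsl_ge (T ω) k
    have hDabs : |c0 * ((2 * h (T ω) - 1) * T ω)| ≤ |c0| * |T ω| := by
      rw [abs_mul, abs_mul]
      have h01 := hh01 (T ω)
      have habs1 : |2 * h (T ω) - 1| ≤ 1 := by
        rw [abs_le]; exact ⟨by linarith [h01.1], by linarith [h01.2]⟩
      nlinarith [abs_nonneg c0, abs_nonneg (T ω),
        mul_le_mul_of_nonneg_right habs1 (abs_nonneg (T ω))]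
    have hD := abs_le.mp hDabs
    have hL1 : -(|psiF h φ (T ω) (t₁ * T ω) - φ 0| / t₁)
        ≤ (psiF h φ (T ω) (t₁ * T ω) - φ 0) / t₁ := by
      rw [← neg_div]
      gcongr
      exact neg_abs_le _
    rw [abs_le]
    constructor
    · have hb2 : (0:ℝ) ≤ |c0| * |T ω| := by positivity
      simp only [hbound]
      linarith
    · have hb1 : (0:ℝ) ≤ |psiF h φ (T ω) (t₁ * T ω) - φ 0| / t₁ := by positivity
      simp only [hbound]
      linarith
  have hGint : ∀ k : ℕ, Integrable (fun ω => (psiF h φ (T ω) (u k * T ω) - φ 0) / u k) P :=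
    fun k => hbound_int.mono' (hGmeas k).aestronglyMeasurable
      (Eventually.of_forall fun ω => by simpa only [Real.norm_eq_abs] using hGbd k ω)
  have hDCT : Tendsto (fun k => ∫ ω, (psiF h φ (T ω) (u k * T ω) - φ 0) / u k ∂P) atTop
      (𝓝 (∫ ω, c0 * ((2 * h (T ω) - 1) * T ω) ∂P)) := by
    refine tendsto_integral_of_dominated_convergence bound
      (fun k => (hGmeas k).aestronglyMeasurable) hbound_int
      (fun k => Eventually.of_forall fun ω => by simpa only [Real.norm_eq_abs] using hGbd k ω)
      (Eventually.of_forall fun ω => hslope (T ω))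
  have hIpos : 0 < ∫ ω, c0 * ((2 * h (T ω) - 1) * T ω) ∂P := by
    rw [integral_const_mul]
    exact hpos
  have hev : ∀ᶠ k : ℕ in atTop, 0 < ∫ ω, (psiF h φ (T ω) (u k * T ω) - φ 0) / u k ∂P :=
    hDCT.eventually (eventually_gt_nhds hIpos)
  obtain ⟨k, hk⟩ := hev.exists
  refine ⟨u k, hupos k, hule k, ?_⟩
  have hψk_int : Integrable (fun ω => psiF h φ (T ω) (u k * T ω)) P := by
    have hadd := ((hGint k).const_mul (u k)).add (integrable_const (φ 0))
    refine hadd.congr (Eventually.of_forall fun ω => ?_)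
    simp only [Pi.add_apply]
    rw [← mul_div_assoc, mul_div_cancel_left₀ _ (hupos k).ne']
    ring
  have heq2 : ∫ ω, (psiF h φ (T ω) (u k * T ω) - φ 0) / u k ∂P
      = ((∫ ω, psiF h φ (T ω) (u k * T ω) ∂P) - φ 0) / u k := by
    rw [integral_div, integral_sub hψk_int (integrable_const (φ 0)), integral_const]
    simp
  rw [heq2] at hk
  have hmul := mul_pos hk (hupos k)
  rw [div_mul_cancel₀ _ (ne_of_gt (hupos k))] at hmul
  linarith
end keylemmas

lemma cond_ext {Ω α : Type*} [MeasurableSpace Ω] [MeasurableSpace α]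
    (P : MeasureTheory.Measure Ω) [IsProbabilityMeasure P] (X : Ω → α) (Y : Ω → ℝ) (η : α → ℝ)
    (hX : Measurable X) (hY : Measurable Y) (hη : Measurable η)
    (hY1 : ∀ ω, |Y ω| ≤ 1) (hη1 : ∀ x, |η x| ≤ 1)
    (hcond : ∀ g : α → ℝ, Measurable g → (∃ C, ∀ x, |g x| ≤ C) →
      ∫ ω, Y ω * g (X ω) ∂P = ∫ ω, η (X ω) * g (X ω) ∂P)
    (f : α → ℝ) (hf : Measurable f) (hfi : Integrable (fun ω => f (X ω)) P) :
    ∫ ω, Y ω * f (X ω) ∂P = ∫ ω, η (X ω) * f (X ω) ∂P := by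
  set g : ℕ → α → ℝ := fun n x => max (min (f x) n) (-(n:ℝ)) with hg
  have hgmeas : ∀ n, Measurable (g n) := fun n => (hf.min measurable_const).max measurable_const
  have hgbd : ∀ n : ℕ, ∀ x, |g n x| ≤ (n:ℝ) := by
    intro n x
    rw [abs_le]
    exact ⟨le_max_right _ _, max_le (min_le_right _ _) (neg_le_self (Nat.cast_nonneg n))⟩
  have hgabs : ∀ n x, |g n x| ≤ |f x| := by
    intro n x
    rw [abs_le]
    constructor
    · exact le_max_of_le_left (le_min (neg_abs_le _)
        (le_trans (neg_nonpos_of_nonneg (abs_nonneg _)) (Nat.cast_nonneg n)))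
    · exact max_le (le_trans (min_le_left _ _) (le_abs_self _))
        (le_trans (neg_nonpos_of_nonneg (Nat.cast_nonneg n)) (abs_nonneg _))
  have hglim : ∀ x, Filter.Tendsto (fun n => g n x) Filter.atTop (𝓝 (f x)) := by
    intro x
    have hev : ∀ᶠ n : ℕ in Filter.atTop, g n x = f x := by
      filter_upwards [Filter.eventually_ge_atTop (Nat.ceil |f x|)] with n hn
      have hfx : |f x| ≤ (n:ℝ) := le_trans (Nat.le_ceil _) (by exact_mod_cast hn)
      have habs := abs_le.mp hfx
      rw [hg]
      simp only []
      rw [min_eq_left habs.2, max_eq_left (by linarith)]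
    exact tendsto_const_nhds.congr' (hev.mono fun n hn => hn.symm)
  have hL : ∀ (Z : Ω → ℝ), Measurable Z → (∀ ω, |Z ω| ≤ 1) →
      Filter.Tendsto (fun n => ∫ ω, Z ω * g n (X ω) ∂P) Filter.atTop
        (𝓝 (∫ ω, Z ω * f (X ω) ∂P)) := by
    intro Z hZ hZ1
    refine tendsto_integral_of_dominated_convergence (fun ω => |f (X ω)|)
      (fun n => (hZ.mul ((hgmeas n).comp hX)).aestronglyMeasurable) hfi.abs
      (fun n => Eventually.of_forall fun ω => ?_) (Eventually.of_forall fun ω => ?_)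
    · rw [Real.norm_eq_abs, abs_mul]
      calc |Z ω| * |g n (X ω)| ≤ 1 * |f (X ω)| :=
            mul_le_mul (hZ1 ω) (hgabs n (X ω)) (abs_nonneg _) zero_le_one
        _ = |f (X ω)| := one_mul _
    · exact (hglim (X ω)).const_mul (Z ω)
  have heq : ∀ n, ∫ ω, Y ω * g n (X ω) ∂P = ∫ ω, η (X ω) * g n (X ω) ∂P :=
    fun n => hcond (g n) (hgmeas n) ⟨n, hgbd n⟩
  have h1 := hL Y hY hY1
  have h2 := hL (fun ω => η (X ω)) (hη.comp hX) (fun ω => hη1 (X ω))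
  have h1' : Filter.Tendsto (fun n => ∫ ω, Y ω * g n (X ω) ∂P) Filter.atTop
      (𝓝 (∫ ω, η (X ω) * f (X ω) ∂P)) := h2.congr fun n => (heq n).symm
  exact tendsto_nhds_unique h1 h1'
open scoped RealInnerProductSpace

/-- The surrogate objective `Q_φ(b) = E[Y·φ(X·b) + (1−Y)·φ(−X·b)]`. -/
noncomputable def Qphi {Ω : Type*} [MeasurableSpace Ω] (P : Measure Ω) {d : ℕ}
    (X : Ω → EuclideanSpace ℝ (Fin d)) (Y : Ω → ℝ) (φ : ℝ → ℝ)
    (b : EuclideanSpace ℝ (Fin d)) : ℝ :=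
  ∫ ω, (Y ω * φ (⟪X ω, b⟫) + (1 - Y ω) * φ (-⟪X ω, b⟫)) ∂P

theorem single_index_implies_T2
    {Ω : Type*} [MeasurableSpace Ω] (P : Measure Ω) [IsProbabilityMeasure P]
    {d : ℕ} (X : Ω → EuclideanSpace ℝ (Fin d)) (Y : Ω → ℝ)
    (η : EuclideanSpace ℝ (Fin d) → ℝ)
    (hX : Measurable X) (hY : Measurable Y) (hY01 : ∀ ω, Y ω = 0 ∨ Y ω = 1)
    (hη : Measurable η) (hη01 : ∀ x, η x ∈ Set.Icc (0 : ℝ) 1)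
    (hcond : ∀ g : EuclideanSpace ℝ (Fin d) → ℝ, Measurable g → (∃ C, ∀ x, |g x| ≤ C) →
      ∫ ω, Y ω * g (X ω) ∂P = ∫ ω, η (X ω) * g (X ω) ∂P)
    (B : Set (EuclideanSpace ℝ (Fin d))) (hBne : B.Nonempty) (hBcpt : IsCompact B)
    (b₀ : EuclideanSpace ℝ (Fin d)) (hb₀B : b₀ ∈ B)
    -- Assumption (Bayes boundary)
    (hBayes₁ : ∀ᵐ ω ∂P, ((1 : ℝ) / 2 ≤ η (X ω) ↔ 0 ≤ ⟪X ω, b₀⟫))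
    (hBayes₂ : 0 < P {ω | 0 < ⟪X ω, b₀⟫}) (hBayes₂' : 0 < P {ω | ⟪X ω, b₀⟫ < 0})
    -- Assumption (surrogate score function)
    (φ : ℝ → ℝ) (hφconc : StrictConcaveOn ℝ Set.univ φ) (hφmono : StrictMono φ)
    (hφdiff : DifferentiableAt ℝ φ 0) (hφderiv : 0 < deriv φ 0)
    -- regularity conditions
    (henv : Integrable (fun ω => ⨆ b ∈ B, (|φ (⟪X ω, b⟫)| + |φ (-⟪X ω, b⟫)|)) P)
    (R : ℝ) (hR : 0 < R) (hBball : B = Metric.closedBall (0 : EuclideanSpace ℝ (Fin d)) R)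
    (hndeg : ∀ v : EuclideanSpace ℝ (Fin d), v ≠ 0 → 0 < P {ω | ⟪X ω, v⟫ ≠ 0})
    -- single index assumption, with T = X·b₀
    (hTint : Integrable (fun ω => ⟪X ω, b₀⟫) P)
    (h : ℝ → ℝ) (hh : Measurable h) (hh01 : ∀ t, h t ∈ Set.Icc (0 : ℝ) 1)
    (hηh : ∀ᵐ ω ∂P, η (X ω) = h (⟪X ω, b₀⟫))
    (hhpos : ∀ t : ℝ, 0 < t → 1 / 2 < h t) (hhneg : ∀ t : ℝ, t < 0 → h t < 1 / 2)
    (hlin : ∀ b : EuclideanSpace ℝ (Fin d), ∃ a : ℝ, a • b₀ ∈ B ∧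
      P[(fun ω => ⟪X ω, b⟫) | MeasurableSpace.comap (fun ω => ⟪X ω, b₀⟫) inferInstance]
        =ᵐ[P] fun ω => a * ⟪X ω, b₀⟫) :
    ∀ bφ ∈ B, (∀ b ∈ B, Qphi P X Y φ b ≤ Qphi P X Y φ bφ) →
      ∀ᵐ ω ∂P, ((0 ≤ ⟪X ω, bφ⟫) ↔ ((1 : ℝ) / 2 ≤ η (X ω))) := by
  classical
  intro bφ hbφB hmax
  -- ## basic facts
  have hφc : ConcaveOn ℝ Set.univ φ := hφconc.concaveOn
  have hφcont : Continuous φ := by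
    rw [← continuousOn_univ]
    exact hφc.continuousOn isOpen_univ
  have hb₀ne : b₀ ≠ 0 := by
    intro h0
    rw [h0] at hBayes₂
    simp only [inner_zero_right, lt_irrefl, Set.setOf_false, measure_empty] at hBayes₂
  have hTm : Measurable (fun ω => (⟪X ω, b₀⟫ : ℝ)) := hX.inner_const
  have hWm : ∀ b : EuclideanSpace ℝ (Fin d), Measurable (fun ω => (⟪X ω, b⟫ : ℝ)) :=
    fun b => hX.inner_const
  have hψcm : Measurable (fun p : ℝ × ℝ => psiF h φ p.1 p.2) := by
    unfold psiF
    exact ((hh.comp measurable_fst).mul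
        (hφcont.measurable.comp measurable_snd)).add
      ((measurable_const.sub (hh.comp measurable_fst)).mul
        (hφcont.measurable.comp measurable_snd.neg))
  have hψconc : ∀ t, ConcaveOn ℝ Set.univ (psiF h φ t) := psi_concave hφc hh01
  have hψabs : ∀ t s, |psiF h φ t s| ≤ |φ s| + |φ (-s)| := psi_abs_le hh01
  have hF0 : ∀ τ : ℝ, psiF h φ τ 0 = φ 0 := by
    intro τ; simp only [psiF, neg_zero]; ring
  -- ## envelope bounds
  have hbd : ∀ b ∈ B, ∀ ω : Ω, |φ (⟪X ω, b⟫)| + |φ (-⟪X ω, b⟫)|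
      ≤ ⨆ b' ∈ B, (|φ (⟪X ω, b'⟫)| + |φ (-⟪X ω, b'⟫)|) := by
    intro b hb ω
    have hip : Continuous (fun b' : EuclideanSpace ℝ (Fin d) => (⟪X ω, b'⟫ : ℝ)) :=
      continuous_const.inner continuous_id
    have hfc : Continuous (fun b' : EuclideanSpace ℝ (Fin d) =>
        |φ (⟪X ω, b'⟫)| + |φ (-⟪X ω, b'⟫)|) :=
      ((hφcont.comp hip).abs).add ((hφcont.comp hip.neg).abs)
    obtain ⟨bm, hbmB, hbm⟩ := hBcpt.exists_isMaxOn hBne hfc.continuousOn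
    have hBdd : BddAbove (Set.range fun b' =>
        ⨆ _ : b' ∈ B, (|φ (⟪X ω, b'⟫)| + |φ (-⟪X ω, b'⟫)|)) := by
      refine ⟨max (|φ (⟪X ω, bm⟫)| + |φ (-⟪X ω, bm⟫)|) 0, ?_⟩
      rintro _ ⟨b', rfl⟩
      dsimp only
      by_cases hb' : b' ∈ B
      · rw [ciSup_pos hb']
        exact le_max_of_le_left (hbm hb')
      · rw [ciSup_neg hb', Real.sSup_empty]
        exact le_max_right _ _
    calc |φ (⟪X ω, b⟫)| + |φ (-⟪X ω, b⟫)|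
        = ⨆ _ : b ∈ B, (|φ (⟪X ω, b⟫)| + |φ (-⟪X ω, b⟫)|) := by rw [ciSup_pos hb]
      _ ≤ ⨆ b' ∈ B, (|φ (⟪X ω, b'⟫)| + |φ (-⟪X ω, b'⟫)|) := le_ciSup hBdd b
  have hIφ : ∀ b ∈ B, Integrable (fun ω => φ (⟪X ω, b⟫)) P := by
    intro b hb
    refine henv.mono' ((hφcont.measurable.comp (hWm b)).aestronglyMeasurable)
      (Eventually.of_forall fun ω => ?_)
    have h1 := hbd b hb ω
    have h2 := abs_nonneg (φ (-⟪X ω, b⟫))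
    rw [Real.norm_eq_abs]; linarith
  have hIφn : ∀ b ∈ B, Integrable (fun ω => φ (-⟪X ω, b⟫)) P := by
    intro b hb
    refine henv.mono' ((hφcont.measurable.comp (hWm b).neg).aestronglyMeasurable)
      (Eventually.of_forall fun ω => ?_)
    have h1 := hbd b hb ω
    have h2 := abs_nonneg (φ (⟪X ω, b⟫))
    rw [Real.norm_eq_abs]; linarith
  have hIψ : ∀ b ∈ B, Integrable (fun ω => psiF h φ (⟪X ω, b₀⟫) (⟪X ω, b⟫)) P := by
    intro b hb
    refine henv.mono' ((hψcm.comp (hTm.prodMk (hWm b))).aestronglyMeasurable)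
      (Eventually.of_forall fun ω => ?_)
    rw [Real.norm_eq_abs]
    exact le_trans (hψabs _ _) (hbd b hb ω)
  have hXb : ∀ b ∈ B, Integrable (fun ω => (⟪X ω, b⟫ : ℝ)) P := by
    intro b hb
    refine ((henv.add (integrable_const (2 * |φ 0|))).div_const (deriv φ 0)).mono'
      ((hWm b).aestronglyMeasurable) (Eventually.of_forall fun ω => ?_)
    have h1 := tangent_at_zero hφc hφdiff (⟪X ω, b⟫)
    have h2 := tangent_at_zero hφc hφdiff (-⟪X ω, b⟫)
    have habs : |deriv φ 0 * ⟪X ω, b⟫| ≤ |φ (⟪X ω, b⟫)| + |φ (-⟪X ω, b⟫)| + 2 * |φ 0| := by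
      rw [abs_le]
      constructor
      · have l1 := neg_abs_le (φ (⟪X ω, b⟫))
        have l2 := le_abs_self (φ 0)
        have l3 := abs_nonneg (φ (-⟪X ω, b⟫))
        have l4 := abs_nonneg (φ 0)
        linarith
      · have l1 := neg_abs_le (φ (-⟪X ω, b⟫))
        have l2 := le_abs_self (φ 0)
        have l3 := abs_nonneg (φ (⟪X ω, b⟫))
        have l4 := abs_nonneg (φ 0)
        linarith
    have hb1 := hbd b hb ω
    rw [Real.norm_eq_abs, le_div_iff₀ hφderiv]
    calc |⟪X ω, b⟫| * deriv φ 0 = |deriv φ 0 * ⟪X ω, b⟫| := by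
          rw [abs_mul, abs_of_pos hφderiv]; ring
      _ ≤ |φ (⟪X ω, b⟫)| + |φ (-⟪X ω, b⟫)| + 2 * |φ 0| := habs
      _ ≤ (⨆ b' ∈ B, (|φ (⟪X ω, b'⟫)| + |φ (-⟪X ω, b'⟫)|)) + 2 * |φ 0| := by linarith
  -- ## Q rewrite
  have hY1 : ∀ ω, |Y ω| ≤ 1 := fun ω => by rcases hY01 ω with h' | h' <;> simp [h']
  have hη1 : ∀ x, |η x| ≤ 1 := fun x =>
    abs_le.mpr ⟨by linarith [(hη01 x).1], (hη01 x).2⟩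
  have hQψ : ∀ b ∈ B, Qphi P X Y φ b = ∫ ω, psiF h φ (⟪X ω, b₀⟫) (⟪X ω, b⟫) ∂P := by
    intro b hb
    have hI1 := hIφ b hb
    have hI2 := hIφn b hb
    have hA : Integrable (fun ω => Y ω * φ (⟪X ω, b⟫)) P :=
      hI1.bdd_mul (c := 1) hY.aestronglyMeasurable (Eventually.of_forall fun ω => by rw [Real.norm_eq_abs]; exact hY1 ω)
    have hA2 : Integrable (fun ω => Y ω * φ (-⟪X ω, b⟫)) P :=
      hI2.bdd_mul (c := 1) hY.aestronglyMeasurable (Eventually.of_forall fun ω => by rw [Real.norm_eq_abs]; exact hY1 ω)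
    have hB2 : Integrable (fun ω => (1 - Y ω) * φ (-⟪X ω, b⟫)) P := by
      refine hI2.bdd_mul (c := 2) ((measurable_const.sub hY).aestronglyMeasurable) (Eventually.of_forall fun ω => ?_)
      rw [Real.norm_eq_abs, abs_le]
      have := abs_le.mp (hY1 ω)
      exact ⟨by linarith [this.2], by linarith [this.1]⟩
    have hIη1 : Integrable (fun ω => η (X ω) * φ (⟪X ω, b⟫)) P :=
      hI1.bdd_mul (c := 1) ((hη.comp hX).aestronglyMeasurable)
        (Eventually.of_forall fun ω => by rw [Real.norm_eq_abs]; exact hη1 (X ω))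
    have hIη2 : Integrable (fun ω => η (X ω) * φ (-⟪X ω, b⟫)) P :=
      hI2.bdd_mul (c := 1) ((hη.comp hX).aestronglyMeasurable)
        (Eventually.of_forall fun ω => by rw [Real.norm_eq_abs]; exact hη1 (X ω))
    have hIη2' : Integrable (fun ω => (1 - η (X ω)) * φ (-⟪X ω, b⟫)) P := by
      refine hI2.bdd_mul (c := 2) ((measurable_const.sub (hη.comp hX)).aestronglyMeasurable)
        (Eventually.of_forall fun ω => ?_)
      rw [Real.norm_eq_abs, abs_le]
      have := abs_le.mp (hη1 (X ω))
      exact ⟨by linarith [this.2], by linarith [this.1]⟩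
    have key1' : ∫ ω, Y ω * φ (⟪X ω, b⟫) ∂P = ∫ ω, η (X ω) * φ (⟪X ω, b⟫) ∂P :=
      cond_ext P X Y η hX hY hη hY1 hη1 hcond (fun x => φ (⟪x, b⟫))
        (hφcont.measurable.comp measurable_id.inner_const) hI1
    have key2' : ∫ ω, Y ω * φ (-⟪X ω, b⟫) ∂P = ∫ ω, η (X ω) * φ (-⟪X ω, b⟫) ∂P :=
      cond_ext P X Y η hX hY hη hY1 hη1 hcond (fun x => φ (-⟪x, b⟫))
        (hφcont.measurable.comp measurable_id.inner_const.neg) hI2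
    have hmid : ∫ ω, psiF h φ (⟪X ω, b₀⟫) (⟪X ω, b⟫) ∂P
        = ∫ ω, (η (X ω) * φ (⟪X ω, b⟫) + (1 - η (X ω)) * φ (-⟪X ω, b⟫)) ∂P := by
      refine integral_congr_ae (hηh.mono fun ω hω => ?_)
      simp only [psiF]
      rw [hω]
    have e1 : ∫ ω, (1 - Y ω) * φ (-⟪X ω, b⟫) ∂P
        = ∫ ω, φ (-⟪X ω, b⟫) ∂P - ∫ ω, Y ω * φ (-⟪X ω, b⟫) ∂P := by
      rw [show (fun ω => (1 - Y ω) * φ (-⟪X ω, b⟫))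
          = fun ω => φ (-⟪X ω, b⟫) - Y ω * φ (-⟪X ω, b⟫) from funext fun ω => by ring,
        integral_sub hI2 hA2]
    have e2 : ∫ ω, (η (X ω) * φ (⟪X ω, b⟫) + (1 - η (X ω)) * φ (-⟪X ω, b⟫)) ∂P
        = ∫ ω, η (X ω) * φ (⟪X ω, b⟫) ∂P
          + (∫ ω, φ (-⟪X ω, b⟫) ∂P - ∫ ω, η (X ω) * φ (-⟪X ω, b⟫) ∂P) := by
      rw [integral_add hIη1 hIη2',
        show (fun ω => (1 - η (X ω)) * φ (-⟪X ω, b⟫))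
          = fun ω => φ (-⟪X ω, b⟫) - η (X ω) * φ (-⟪X ω, b⟫) from funext fun ω => by ring,
        integral_sub hI2 hIη2]
    unfold Qphi
    rw [integral_add hA hB2, e1, key1', key2', hmid, e2]
  -- ## single-index reduction
  obtain ⟨a, haB, hacond⟩ := hlin bφ
  have hsmul : ∀ (c : ℝ) (ω : Ω), (⟪X ω, c • b₀⟫ : ℝ) = c * ⟪X ω, b₀⟫ :=
    fun c ω => real_inner_smul_right _ _ _
  have hIaT : Integrable (fun ω => psiF h φ (⟪X ω, b₀⟫) (a * ⟪X ω, b₀⟫)) P := by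
    refine (hIψ _ haB).congr (Eventually.of_forall fun ω => ?_)
    simp only [real_inner_smul_right]
  have hJ : ∫ ω, psiF h φ (⟪X ω, b₀⟫) (⟪X ω, bφ⟫) ∂P
      ≤ ∫ ω, psiF h φ (⟪X ω, b₀⟫) (a * ⟪X ω, b₀⟫) ∂P :=
    key1 P (fun ω => ⟪X ω, b₀⟫) (fun ω => ⟪X ω, bφ⟫) hTm (hWm bφ) hTint (hXb bφ hbφB)
      φ h hφc hφcont hh hh01 a hacond (hIψ bφ hbφB) hIaT
  have hZeq : ∀ᵐ ω ∂P, (⟪X ω, bφ⟫ : ℝ) = a * ⟪X ω, b₀⟫ := by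
    by_contra hne
    have hApos : 0 < P {ω | ¬ ((⟪X ω, bφ⟫ : ℝ) = a * ⟪X ω, b₀⟫)} := by
      rcases eq_or_lt_of_le (zero_le : 0 ≤ P {ω | ¬ ((⟪X ω, bφ⟫ : ℝ) = a * ⟪X ω, b₀⟫)})
        with heq0 | hlt
      · exact absurd (ae_iff.mpr heq0.symm) hne
      · exact hlt
    set cmid : EuclideanSpace ℝ (Fin d) := (1/2 : ℝ) • bφ + (1/2 : ℝ) • (a • b₀) with hcmid
    have hconv : Convex ℝ B := hBball ▸ convex_closedBall 0 R
    have hcmidB : cmid ∈ B := hconv hbφB haB (by norm_num) (by norm_num) (by norm_num)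
    have hinner_c : ∀ ω : Ω, (⟪X ω, cmid⟫ : ℝ) = (⟪X ω, bφ⟫ + a * ⟪X ω, b₀⟫) / 2 := by
      intro ω
      rw [hcmid, inner_add_right, real_inner_smul_right, real_inner_smul_right,
        real_inner_smul_right]
      ring
    have hIc := hIψ cmid hcmidB
    set dfun : Ω → ℝ := fun ω => psiF h φ (⟪X ω, b₀⟫) (⟪X ω, cmid⟫)
      - (psiF h φ (⟪X ω, b₀⟫) (⟪X ω, bφ⟫) + psiF h φ (⟪X ω, b₀⟫) (a * ⟪X ω, b₀⟫)) / 2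
      with hdfun
    have hdnonneg : ∀ ω, 0 ≤ dfun ω := by
      intro ω
      rw [hdfun]
      dsimp only
      rw [hinner_c ω]
      rcases eq_or_ne (⟪X ω, bφ⟫ : ℝ) (a * ⟪X ω, b₀⟫) with heq | hne'
      · rw [heq, show (a * ⟪X ω, b₀⟫ + a * ⟪X ω, b₀⟫) / 2 = a * ⟪X ω, b₀⟫ by ring]
        linarith
      · have := psi_mid hφconc hh01 (⟪X ω, b₀⟫) hne'
        linarith
    have hdint : Integrable dfun P := hIc.sub (((hIψ bφ hbφB).add hIaT).div_const 2)
    have hdpos : 0 < ∫ ω, dfun ω ∂P := by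
      refine (integral_pos_iff_support_of_nonneg_ae
        (Eventually.of_forall hdnonneg) hdint).mpr ?_
      refine lt_of_lt_of_le hApos (measure_mono ?_)
      intro ω hω
      have hne' : (⟪X ω, bφ⟫ : ℝ) ≠ a * ⟪X ω, b₀⟫ := hω
      have hstrict := psi_mid hφconc hh01 (⟪X ω, b₀⟫) hne'
      have hgt0 : 0 < dfun ω := by
        rw [hdfun]; dsimp only; rw [hinner_c ω]; linarith
      exact Function.mem_support.mpr (ne_of_gt hgt0)
    have hsplit : ∫ ω, dfun ω ∂P = ∫ ω, psiF h φ (⟪X ω, b₀⟫) (⟪X ω, cmid⟫) ∂P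
        - (∫ ω, psiF h φ (⟪X ω, b₀⟫) (⟪X ω, bφ⟫) ∂P
          + ∫ ω, psiF h φ (⟪X ω, b₀⟫) (a * ⟪X ω, b₀⟫) ∂P) / 2 := by
      have hsum_int : Integrable (fun ω => (psiF h φ (⟪X ω, b₀⟫) (⟪X ω, bφ⟫)
          + psiF h φ (⟪X ω, b₀⟫) (a * ⟪X ω, b₀⟫)) / 2) P :=
        ((hIψ bφ hbφB).add hIaT).div_const 2
      rw [hdfun]
      rw [integral_sub hIc hsum_int, integral_div, integral_add (hIψ bφ hbφB) hIaT]
    have hcle : ∫ ω, psiF h φ (⟪X ω, b₀⟫) (⟪X ω, cmid⟫) ∂P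
        ≤ ∫ ω, psiF h φ (⟪X ω, b₀⟫) (⟪X ω, bφ⟫) ∂P := by
      have hq := hmax cmid hcmidB
      rwa [hQψ cmid hcmidB, hQψ bφ hbφB] at hq
    rw [hsplit] at hdpos
    linarith
  have hbφeq : bφ = a • b₀ := by
    by_contra hne
    have hv : bφ - a • b₀ ≠ 0 := sub_ne_zero.mpr hne
    have hpos := hndeg _ hv
    have h0 : P {ω | (⟪X ω, bφ - a • b₀⟫ : ℝ) ≠ 0} = 0 := by
      have hae : ∀ᵐ ω ∂P, (⟪X ω, bφ - a • b₀⟫ : ℝ) = 0 := by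
        filter_upwards [hZeq] with ω hω
        rw [inner_sub_right, real_inner_smul_right, hω, sub_self]
      exact ae_iff.mp hae
    rw [h0] at hpos
    exact lt_irrefl 0 hpos
  -- positivity of E[(2h(T)-1)T]
  have hw_nonneg : ∀ ω : Ω, 0 ≤ (2 * h (⟪X ω, b₀⟫) - 1) * ⟪X ω, b₀⟫ := by
    intro ω
    rcases lt_trichotomy (⟪X ω, b₀⟫ : ℝ) 0 with ht | ht | ht
    · have := hhneg _ ht; nlinarith
    · rw [ht, mul_zero]
    · have := hhpos _ ht; nlinarith
  have hw_int : Integrable (fun ω => (2 * h (⟪X ω, b₀⟫) - 1) * ⟪X ω, b₀⟫) P := by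
    have hwm : Measurable (fun ω => (2 * h (⟪X ω, b₀⟫) - 1) * ⟪X ω, b₀⟫) :=
      (((hh.comp hTm).const_mul 2).sub measurable_const).mul hTm
    refine hTint.abs.mono' hwm.aestronglyMeasurable (Eventually.of_forall fun ω => ?_)
    rw [Real.norm_eq_abs, abs_mul]
    have h01 := hh01 (⟪X ω, b₀⟫)
    have habs1 : |2 * h (⟪X ω, b₀⟫) - 1| ≤ 1 :=
      abs_le.mpr ⟨by linarith [h01.1], by linarith [h01.2]⟩
    nlinarith [abs_nonneg (⟪X ω, b₀⟫ : ℝ), abs_nonneg (2 * h (⟪X ω, b₀⟫) - 1)]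
  have hw_pos : 0 < ∫ ω, (2 * h (⟪X ω, b₀⟫) - 1) * ⟪X ω, b₀⟫ ∂P := by
    refine (integral_pos_iff_support_of_nonneg_ae
      (Eventually.of_forall hw_nonneg) hw_int).mpr ?_
    refine lt_of_lt_of_le hBayes₂ (measure_mono ?_)
    intro ω hω
    have ht : (0:ℝ) < ⟪X ω, b₀⟫ := hω
    have := hhpos _ ht
    exact Function.mem_support.mpr (ne_of_gt (mul_pos (by linarith) ht))
  have hLpos : 0 < deriv φ 0 * ∫ ω, (2 * h (⟪X ω, b₀⟫) - 1) * ⟪X ω, b₀⟫ ∂P :=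
    mul_pos hφderiv hw_pos
  -- key2 with t₁ = R/‖b₀‖
  have hnb₀ : 0 < ‖b₀‖ := norm_pos_iff.mpr hb₀ne
  have ht₁pos : 0 < R / ‖b₀‖ := div_pos hR hnb₀
  have htB : ∀ s : ℝ, 0 ≤ s → s ≤ R / ‖b₀‖ → s • b₀ ∈ B := by
    intro s h1 h2
    rw [hBball, mem_closedBall_zero_iff, norm_smul, Real.norm_eq_abs, abs_of_nonneg h1]
    calc s * ‖b₀‖ ≤ (R / ‖b₀‖) * ‖b₀‖ := by nlinarith
      _ = R := div_mul_cancel₀ R (ne_of_gt hnb₀)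
  have hIt₁ : Integrable (fun ω => psiF h φ (⟪X ω, b₀⟫) ((R / ‖b₀‖) * ⟪X ω, b₀⟫)) P := by
    refine (hIψ _ (htB _ ht₁pos.le le_rfl)).congr (Eventually.of_forall fun ω => ?_)
    simp only [real_inner_smul_right]
  obtain ⟨t, htpos, htle, hgt⟩ := key2 P (fun ω => ⟪X ω, b₀⟫) hTm hTint φ h hφc hφcont
    hφdiff hh hh01 (R / ‖b₀‖) ht₁pos hIt₁ hLpos
  have hItT : Integrable (fun ω => psiF h φ (⟪X ω, b₀⟫) (t * ⟪X ω, b₀⟫)) P := by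
    refine (hIψ _ (htB t htpos.le htle)).congr (Eventually.of_forall fun ω => ?_)
    simp only [real_inner_smul_right]
  have hmax_t : ∫ ω, psiF h φ (⟪X ω, b₀⟫) (t * ⟪X ω, b₀⟫) ∂P
      ≤ ∫ ω, psiF h φ (⟪X ω, b₀⟫) (a * ⟪X ω, b₀⟫) ∂P := by
    have h1 := hmax (t • b₀) (htB t htpos.le htle)
    rw [hQψ _ (htB t htpos.le htle), hQψ bφ hbφB] at h1
    have e1 : ∫ ω, psiF h φ (⟪X ω, b₀⟫) (⟪X ω, t • b₀⟫) ∂P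
        = ∫ ω, psiF h φ (⟪X ω, b₀⟫) (t * ⟪X ω, b₀⟫) ∂P :=
      integral_congr_ae (Eventually.of_forall fun ω => by
        simp only [real_inner_smul_right])
    have e2 : ∫ ω, psiF h φ (⟪X ω, b₀⟫) (⟪X ω, bφ⟫) ∂P
        = ∫ ω, psiF h φ (⟪X ω, b₀⟫) (a * ⟪X ω, b₀⟫) ∂P :=
      integral_congr_ae (Eventually.of_forall fun ω => by
        rw [hbφeq]; simp only [real_inner_smul_right])
    rw [e1, e2] at h1
    exact h1
  have hgta : φ 0 < ∫ ω, psiF h φ (⟪X ω, b₀⟫) (a * ⟪X ω, b₀⟫) ∂P := lt_of_lt_of_le hgt hmax_t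
  have hapos : 0 < a := by
    rcases lt_trichotomy a 0 with ha | ha | ha
    · exfalso
      set l : ℝ := t / (t - a) with hl
      have htma : 0 < t - a := by linarith
      have hl0 : 0 < l := div_pos htpos htma
      have hl1 : l < 1 := by rw [hl, div_lt_one htma]; linarith
      have hps : ∀ ω : Ω, l * psiF h φ (⟪X ω, b₀⟫) (a * ⟪X ω, b₀⟫)
          + (1 - l) * psiF h φ (⟪X ω, b₀⟫) (t * ⟪X ω, b₀⟫) ≤ φ 0 := by
        intro ω
        have hcc := (hψconc (⟪X ω, b₀⟫)).2 (Set.mem_univ (a * ⟪X ω, b₀⟫))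
          (Set.mem_univ (t * ⟪X ω, b₀⟫)) hl0.le (by linarith : (0:ℝ) ≤ 1 - l) (by ring)
        simp only [smul_eq_mul] at hcc
        have hpoint : l * (a * ⟪X ω, b₀⟫) + (1 - l) * (t * ⟪X ω, b₀⟫) = 0 := by
          rw [hl]; field_simp; ring
        rw [hpoint, hF0] at hcc
        exact hcc
      have hint_comb : ∫ ω, (l * psiF h φ (⟪X ω, b₀⟫) (a * ⟪X ω, b₀⟫)
          + (1 - l) * psiF h φ (⟪X ω, b₀⟫) (t * ⟪X ω, b₀⟫)) ∂P ≤ φ 0 := by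
        have hmono := integral_mono ((hIaT.const_mul l).add (hItT.const_mul (1 - l)))
          (integrable_const (φ 0)) hps
        rwa [integral_const, probReal_univ, one_smul] at hmono
      rw [integral_add (hIaT.const_mul l) (hItT.const_mul (1 - l)), integral_const_mul,
        integral_const_mul] at hint_comb
      nlinarith [mul_nonneg hl0.le (sub_nonneg.mpr hmax_t)]
    · exfalso
      have heq0 : ∫ ω, psiF h φ (⟪X ω, b₀⟫) (a * ⟪X ω, b₀⟫) ∂P = φ 0 := by
        rw [show (fun ω => psiF h φ (⟪X ω, b₀⟫) (a * ⟪X ω, b₀⟫)) = fun _ : Ω => φ 0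
          from funext fun ω => by rw [ha, zero_mul, hF0], integral_const, probReal_univ,
          one_smul]
      linarith
    · exact ha
  -- conclusion
  filter_upwards [hBayes₁] with ω hB1
  have hre : (⟪X ω, bφ⟫ : ℝ) = a * ⟪X ω, b₀⟫ := by
    rw [hbφeq]; exact real_inner_smul_right _ _ _
  rw [hre]
  constructor
  · intro h0
    refine hB1.mpr ?_
    by_contra hneg
    push_neg at hneg
    nlinarith
  · intro h₂
    exact mul_nonneg hapos.le (hB1.mp h₂)
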